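/- Let n ≥ 2 be an integer, let c and d be positive integers, set m = lcm(c,d), and let i₁,…,i_k be distinct elements of {1,…,n−1}. Let K be a field and let ψ : K[x₁,…,xₙ,y₁,…,y_k] → K[u₁,…,uₙ] be the K-algebra homomorphism with ψ(xⱼ) = uⱼ^c for j = 1,…,n and ψ(yⱼ) = u_{i_j}^d·uₙ^d for j = 1,…,k. Then ker ψ is generated by the k binomials yⱼ^{m/d} − x_{i_j}^{m/c}·xₙ^{m/c} (j = 1,…,k); in particular the simplicial toric variety parametrized by xⱼ = uⱼ^c, yⱼ = u_{i_j}^d uₙ^d is a complete intersection. -/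

import Mathlib

open MvPolynomial

private lemma prodMonomialOne {W K : Type*} [CommSemiring K] {α : Type*} (s : Finset α)
    (f : α → (W →₀ ℕ)) :
    monomial (∑ j ∈ s, f j) (1 : K) = ∏ j ∈ s, (monomial (f j) (1 : K)) := by
  induction s using Finset.cons_induction with
  | empty => simp
  | cons a s ha ih =>
      rw [Finset.prod_cons, Finset.sum_cons, ← ih, monomial_mul, one_mul]

private lemma psiMonomial {V W K : Type*} [DecidableEq V] [CommSemiring K]
    (φ : MvPolynomial V K →ₐ[K] MvPolynomial W K) (w : V → (W →₀ ℕ))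
    (hw : ∀ v, φ (X v) = monomial (w v) 1) (σ : V →₀ ℕ) (r : K) :
    φ (monomial σ r) = monomial (σ.sum fun v e => e • w v) r := by
  induction σ using Finsupp.induction with
  | zero => simp [monomial_zero', MvPolynomial.algebraMap_eq]
  | single_add a b f haf hb ih =>
      have h1 : monomial (Finsupp.single a b + f) r = X a ^ b * monomial f r := by
        rw [X_pow_eq_monomial, monomial_mul, one_mul]
      have h2 : (Finsupp.single a b).sum (fun v e => e • w v) = b • w a :=
        Finsupp.sum_single_index (zero_smul ℕ _)
      rw [h1, map_mul, map_pow, hw, ih, monomial_pow, one_pow, monomial_mul, one_mul,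
        Finsupp.sum_add_index (by intro x _; exact zero_smul ℕ _)
          (by intro x _ e1 e2; exact add_smul e1 e2 _), h2]

private lemma natKey {c d : ℕ} (hc : 0 < c) (hd : 0 < d) {a a' b b' : ℕ}
    (hb : b < Nat.lcm c d / d) (hb' : b' < Nat.lcm c d / d)
    (h : a * c + b * d = a' * c + b' * d) : a = a' ∧ b = b' := by
  set g := Nat.gcd c d with hg
  have hgpos : 0 < g := Nat.gcd_pos_of_pos_left _ hc
  have hcg : g ∣ c := Nat.gcd_dvd_left _ _
  have hdg : g ∣ d := Nat.gcd_dvd_right _ _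
  have hmd : Nat.lcm c d / d = c / g := by
    rw [Nat.lcm]
    rw [show c * d = (c / g) * d * g by rw [mul_right_comm, Nat.div_mul_cancel hcg]]
    rw [Nat.mul_div_cancel _ hgpos, Nat.mul_div_cancel _ hd]
  rw [hmd] at hb hb'
  have hcop : Nat.Coprime (c / g) (d / g) := Nat.coprime_div_gcd_div_gcd hgpos
  have hbb' : b = b' := by
    have hz : (a : ℤ) * c + b * d = a' * c + b' * d := by exact_mod_cast h
    have hcz : (c : ℤ) = g * (c / g : ℕ) := by exact_mod_cast (Nat.mul_div_cancel' hcg).symm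
    have hdz : (d : ℤ) = g * (d / g : ℕ) := by exact_mod_cast (Nat.mul_div_cancel' hdg).symm
    have hcancel : ((b : ℤ) - b') * (d / g : ℕ) = ((a' : ℤ) - a) * (c / g : ℕ) := by
      have : (g : ℤ) * (((b : ℤ) - b') * (d / g : ℕ)) = g * (((a' : ℤ) - a) * (c / g : ℕ)) := by
        rw [hcz, hdz] at hz; ring_nf; ring_nf at hz; linarith
      exact mul_left_cancel₀ (by exact_mod_cast hgpos.ne') this
    have hdvd : ((c / g : ℕ) : ℤ) ∣ (b : ℤ) - b' := by
      have : ((c / g : ℕ) : ℤ) ∣ ((b : ℤ) - b') * (d / g : ℕ) := ⟨_, hcancel.trans (mul_comm _ _)⟩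
      exact (Nat.isCoprime_iff_coprime.mpr hcop).dvd_of_dvd_mul_right this
    have habs : |(b : ℤ) - b'| < (c / g : ℕ) := by
      rw [abs_sub_lt_iff]
      constructor <;> [skip; skip] <;>
        · have h1 : (b : ℤ) < (c / g : ℕ) := by exact_mod_cast hb
          have h2 : (b' : ℤ) < (c / g : ℕ) := by exact_mod_cast hb'
          omega
    have := Int.eq_zero_of_abs_lt_dvd hdvd habs
    omega
  subst hbb'
  exact ⟨Nat.eq_of_mul_eq_mul_right hc (by omega), rfl⟩

/-- For `n ≥ 2`, positive `c, d`, `m = lcm(c,d)`, and distinct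
`i₁, …, i_k ∈ {1, …, n-1}`, the kernel of the `K`-algebra homomorphism
`ψ : K[x₁,…,xₙ,y₁,…,y_k] → K[u₁,…,uₙ]` with `ψ(xⱼ) = uⱼ^c` and `ψ(yⱼ) = u_{i_j}^d·uₙ^d`
is generated by the `k` binomials `yⱼ^{m/d} − x_{i_j}^{m/c}·xₙ^{m/c}`. -/
theorem stmt1 (n k : ℕ) (hn : 2 ≤ n) (c d : ℕ) (hc : 0 < c) (hd : 0 < d)
    (i : Fin k → Fin (n - 1)) (hinj : Function.Injective i)
    (K : Type*) [Field K]
    (ψ : MvPolynomial (Fin n ⊕ Fin k) K →ₐ[K] MvPolynomial (Fin n) K)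
    (hψx : ∀ j : Fin n, ψ (X (Sum.inl j)) = X j ^ c)
    (hψy : ∀ j : Fin k, ψ (X (Sum.inr j)) =
      X (Fin.castLE (by omega) (i j)) ^ d * X (⟨n - 1, by omega⟩ : Fin n) ^ d) :
    RingHom.ker ψ =
      Ideal.span (Set.range fun j : Fin k =>
        (X (Sum.inr j) ^ (Nat.lcm c d / d) -
          X (Sum.inl (Fin.castLE (by omega) (i j))) ^ (Nat.lcm c d / c) *
            X (Sum.inl (⟨n - 1, by omega⟩ : Fin n)) ^ (Nat.lcm c d / c) :
          MvPolynomial (Fin n ⊕ Fin k) K)) := by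
  classical
  have hn' : n - 1 ≤ n := by omega
  set L : Fin n := ⟨n - 1, by omega⟩ with hL
  set ι : Fin k → Fin n := fun j => Fin.castLE hn' (i j) with hι
  set md : ℕ := Nat.lcm c d / d with hmd
  set mc : ℕ := Nat.lcm c d / c with hmc
  set J : Ideal (MvPolynomial (Fin n ⊕ Fin k) K) :=
    Ideal.span (Set.range fun j : Fin k =>
      (X (Sum.inr j) ^ md - X (Sum.inl (ι j)) ^ mc * X (Sum.inl L) ^ mc :
        MvPolynomial (Fin n ⊕ Fin k) K)) with hJ
  show RingHom.ker ψ = J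
  have hlcmpos : 0 < Nat.lcm c d := Nat.pos_of_ne_zero (Nat.lcm_ne_zero hc.ne' hd.ne')
  have hdmd : d * md = Nat.lcm c d := Nat.mul_div_cancel' (Nat.dvd_lcm_right c d)
  have hcmc : c * mc = Nat.lcm c d := Nat.mul_div_cancel' (Nat.dvd_lcm_left c d)
  have hmdpos : 0 < md := by
    rw [hmd]; exact Nat.div_pos (Nat.le_of_dvd hlcmpos (Nat.dvd_lcm_right c d)) hd
  have hιinj : Function.Injective ι := fun a b hab => hinj (Fin.castLE_injective hn' hab)
  have hιL : ∀ j, ι j ≠ L := by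
    intro j hj
    have := (i j).isLt
    have : (ι j : ℕ) = n - 1 := by rw [hj]
    simp [hι, Fin.castLE] at this
    omega
  -- the exponent vectors of the images of the variables
  set w : Fin n ⊕ Fin k → (Fin n →₀ ℕ) :=
    Sum.elim (fun l => Finsupp.single l c)
      (fun j => Finsupp.single (ι j) d + Finsupp.single L d) with hwdef
  have hw : ∀ v, ψ (X v) = monomial (w v) 1 := by
    rintro (l | j)
    · rw [hψx, X_pow_eq_monomial]; rfl
    · show ψ (X (Sum.inr j)) = monomial (Finsupp.single (ι j) d + Finsupp.single L d) 1
      rw [hψy, X_pow_eq_monomial, X_pow_eq_monomial, monomial_mul, one_mul]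
  set E : ((Fin n ⊕ Fin k) →₀ ℕ) → (Fin n →₀ ℕ) :=
    fun σ => σ.sum fun v e => e • w v with hEdef
  have hψm : ∀ (σ : (Fin n ⊕ Fin k) →₀ ℕ) (r : K), ψ (monomial σ r) = monomial (E σ) r :=
    fun σ r => psiMonomial ψ w hw σ r
  -- evaluation of E
  have hE : ∀ (σ : (Fin n ⊕ Fin k) →₀ ℕ) (l : Fin n),
      E σ l = σ (Sum.inl l) * c +
        ∑ j : Fin k, σ (Sum.inr j) * ((if ι j = l then d else 0) + (if L = l then d else 0)) := by
    intro σ l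
    rw [hEdef]
    rw [Finsupp.sum_apply, Finsupp.sum_fintype _ _ (by intro v; simp)]
    rw [Fintype.sum_sum_type]
    congr 1
    · simp [hwdef, Finsupp.single_apply, Finset.sum_ite_eq']
    · refine Finset.sum_congr rfl fun x _ => ?_
      by_cases h1 : ι x = l <;> by_cases h2 : L = l <;>
        simp [hwdef, Finsupp.single_apply, h1, h2, mul_add]
  have hEι : ∀ (σ : (Fin n ⊕ Fin k) →₀ ℕ) (j₀ : Fin k),
      E σ (ι j₀) = σ (Sum.inl (ι j₀)) * c + σ (Sum.inr j₀) * d := by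
    intro σ j₀
    rw [hE]
    congr 1
    simp only [if_neg (Ne.symm (hιL j₀)), add_zero, hιinj.eq_iff, mul_ite, mul_zero]
    rw [Finset.sum_ite_eq' Finset.univ j₀ (fun j => σ (Sum.inr j) * d)]
    simp
  have hEL : ∀ (σ : (Fin n ⊕ Fin k) →₀ ℕ),
      E σ L = σ (Sum.inl L) * c + (∑ j : Fin k, σ (Sum.inr j)) * d := by
    intro σ
    rw [hE]
    congr 1
    rw [Finset.sum_mul]
    refine Finset.sum_congr rfl fun j _ => ?_
    rw [if_neg (hιL j), if_pos rfl, zero_add]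
  have hEo : ∀ (σ : (Fin n ⊕ Fin k) →₀ ℕ) (l : Fin n), l ≠ L → (∀ j, ι j ≠ l) →
      E σ l = σ (Sum.inl l) * c := by
    intro σ l h1 h2
    rw [hE, Finset.sum_eq_zero (fun j _ => by
      rw [if_neg (h2 j), if_neg (Ne.symm h1)]; simp), add_zero]
  -- injectivity of E on normal-form exponents
  have hEinj : ∀ σ τ : (Fin n ⊕ Fin k) →₀ ℕ, (∀ j, σ (Sum.inr j) < md) →
      (∀ j, τ (Sum.inr j) < md) → E σ = E τ → σ = τ := by
    intro σ τ hσ hτ h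
    have hinr : ∀ j, σ (Sum.inr j) = τ (Sum.inr j) ∧
        σ (Sum.inl (ι j)) = τ (Sum.inl (ι j)) := by
      intro j
      have h1 := DFunLike.congr_fun h (ι j)
      rw [hEι, hEι] at h1
      obtain ⟨ha, hb⟩ := natKey hc hd (hσ j) (hτ j) h1
      exact ⟨hb, ha⟩
    have hinr' : ∀ j, σ (Sum.inr j) = τ (Sum.inr j) := fun j => (hinr j).1
    ext v
    match v with
    | Sum.inr j => exact hinr' j
    | Sum.inl l =>
      by_cases hl : l = L
      · have h1 := DFunLike.congr_fun h L
        rw [hEL, hEL, Finset.sum_congr rfl (fun j _ => hinr' j)] at h1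
        rw [hl]
        exact Nat.eq_of_mul_eq_mul_right hc (Nat.add_right_cancel h1)
      · by_cases hex : ∃ j, ι j = l
        · obtain ⟨j, rfl⟩ := hex
          exact (hinr j).2
        · push_neg at hex
          have h1 := DFunLike.congr_fun h l
          rw [hEo σ l hl hex, hEo τ l hl hex] at h1
          exact Nat.eq_of_mul_eq_mul_right hc h1
  -- the normal form
  set Q : ((Fin n ⊕ Fin k) →₀ ℕ) → Fin k → ℕ := fun σ j => σ (Sum.inr j) / md with hQ
  set D : ((Fin n ⊕ Fin k) →₀ ℕ) → ((Fin n ⊕ Fin k) →₀ ℕ) :=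
    fun σ => ∑ j : Fin k, Finsupp.single (Sum.inr j) (md * Q σ j) with hD
  set R : ((Fin n ⊕ Fin k) →₀ ℕ) → ((Fin n ⊕ Fin k) →₀ ℕ) :=
    fun σ => ∑ j : Fin k, Q σ j •
      (Finsupp.single (Sum.inl (ι j)) mc + Finsupp.single (Sum.inl L) mc) with hR
  set NF : ((Fin n ⊕ Fin k) →₀ ℕ) → ((Fin n ⊕ Fin k) →₀ ℕ) :=
    fun σ => (σ - D σ) + R σ with hNF
  have hDapp : ∀ σ v, D σ v = Sum.elim (fun _ => 0) (fun j => md * Q σ j) v := by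
    rintro σ (l | j) <;>
      simp [hD, Finsupp.finset_sum_apply, Finsupp.single_apply, Finset.sum_ite_eq']
  have hRapp_inr : ∀ σ j, R σ (Sum.inr j) = 0 := by
    intro σ j
    simp [hR, Finsupp.finset_sum_apply, Finsupp.single_apply]
  have hDle : ∀ σ, D σ ≤ σ := by
    intro σ
    rw [Finsupp.le_def]
    rintro (l | j) <;> rw [hDapp]
    · exact Nat.zero_le _
    · exact (Nat.mul_div_le _ _ : md * (σ (Sum.inr j) / md) ≤ _)
  have hNFnormal : ∀ σ j, NF σ (Sum.inr j) < md := by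
    intro σ j
    rw [hNF]
    simp only [Finsupp.add_apply, Finsupp.tsub_apply, hRapp_inr, add_zero, hDapp]
    simp only [Sum.elim_inr, hQ]
    have h1 := Nat.div_add_mod (σ (Sum.inr j)) md
    have h2 := Nat.mod_lt (σ (Sum.inr j)) hmdpos
    omega
  -- reduction modulo J
  have hmkNF : ∀ (σ : (Fin n ⊕ Fin k) →₀ ℕ) (r : K),
      Ideal.Quotient.mk J (monomial σ r) = Ideal.Quotient.mk J (monomial (NF σ) r) := by
    intro σ r
    have h1 : monomial σ r = monomial (σ - D σ) r * monomial (D σ) 1 := by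
      rw [monomial_mul, mul_one, tsub_add_cancel_of_le (hDle σ)]
    have h2 : monomial (NF σ) r = monomial (σ - D σ) r * monomial (R σ) 1 := by
      rw [monomial_mul, mul_one, hNF]
    rw [h1, h2, map_mul, map_mul]
    congr 1
    rw [hD, hR, prodMonomialOne, prodMonomialOne, map_prod, map_prod]
    refine Finset.prod_congr rfl fun j _ => ?_
    have h3 : (monomial (Finsupp.single (Sum.inr j : Fin n ⊕ Fin k) (md * Q σ j)) (1 : K)) =
        ((X (Sum.inr j) : MvPolynomial (Fin n ⊕ Fin k) K) ^ md) ^ Q σ j := by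
      rw [← pow_mul, X_pow_eq_monomial]
    have h4 : (monomial (Q σ j • (Finsupp.single (Sum.inl (ι j) : Fin n ⊕ Fin k) mc +
        Finsupp.single (Sum.inl L) mc)) (1 : K)) =
        ((X (Sum.inl (ι j)) : MvPolynomial (Fin n ⊕ Fin k) K) ^ mc * X (Sum.inl L) ^ mc) ^
          Q σ j := by
      rw [X_pow_eq_monomial, X_pow_eq_monomial, monomial_mul, one_mul, monomial_pow, one_pow]
    have h5 : (Ideal.Quotient.mk J) (X (Sum.inr j) ^ md) =
        (Ideal.Quotient.mk J) (X (Sum.inl (ι j)) ^ mc * X (Sum.inl L) ^ mc) := by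
      rw [Ideal.Quotient.eq]
      exact Ideal.subset_span ⟨j, rfl⟩
    rw [h3, h4]
    simp only [map_pow, map_mul] at h5 ⊢
    rw [h5]
  -- J is contained in the kernel
  have hJker : J ≤ RingHom.ker ψ := by
    rw [hJ, Ideal.span_le]
    rintro _ ⟨j, rfl⟩
    simp only [SetLike.mem_coe, RingHom.mem_ker, map_sub, map_mul, map_pow, hψx]
    rw [hψy j]
    show (X (ι j) ^ d * X L ^ d) ^ md - (X (ι j) ^ c) ^ mc * (X L ^ c) ^ mc = 0
    rw [mul_pow, ← pow_mul, ← pow_mul, ← pow_mul, ← pow_mul, hdmd, hcmc, sub_self]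
  refine le_antisymm ?_ hJker
  intro p hp
  rw [RingHom.mem_ker] at hp
  set q : MvPolynomial (Fin n ⊕ Fin k) K :=
    ∑ σ ∈ p.support, monomial (NF σ) (coeff σ p) with hq
  have hmkpq : Ideal.Quotient.mk J p = Ideal.Quotient.mk J q := by
    conv_lhs => rw [← p.support_sum_monomial_coeff]
    rw [hq, map_sum, map_sum]
    exact Finset.sum_congr rfl fun σ _ => hmkNF σ (coeff σ p)
  have hpqJ : p - q ∈ J := (Ideal.Quotient.eq).mp hmkpq
  have hψq : ψ q = 0 := by
    have h1 : ψ (p - q) = 0 := hJker hpqJ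
    rw [map_sub, hp, zero_sub, neg_eq_zero] at h1
    exact h1
  have hcoeffq : ∀ τ : (Fin n ⊕ Fin k) →₀ ℕ,
      coeff τ q = ∑ σ ∈ p.support, if NF σ = τ then coeff σ p else 0 := by
    intro τ
    rw [hq, MvPolynomial.coeff_sum]
    exact Finset.sum_congr rfl fun σ _ => coeff_monomial τ (NF σ) (coeff σ p)
  have hq0 : q = 0 := by
    apply MvPolynomial.ext
    intro τ
    rw [coeff_zero]
    by_cases hex : ∃ σ₀ ∈ p.support, NF σ₀ = τ
    · obtain ⟨σ₀, hσ₀, rfl⟩ := hex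
      have hψqsum : ψ q = ∑ σ ∈ p.support, monomial (E (NF σ)) (coeff σ p) := by
        rw [hq, map_sum]
        exact Finset.sum_congr rfl fun σ _ => hψm (NF σ) (coeff σ p)
      have h2 : coeff (E (NF σ₀)) (ψ q) =
          ∑ σ ∈ p.support, if NF σ = NF σ₀ then coeff σ p else 0 := by
        rw [hψqsum, MvPolynomial.coeff_sum]
        refine Finset.sum_congr rfl fun σ _ => ?_
        rw [coeff_monomial]
        congr 1
        simp only [eq_iff_iff]
        constructor
        · exact fun h => hEinj _ _ (hNFnormal σ) (hNFnormal σ₀) h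
        · exact fun h => congrArg E h
      rw [hcoeffq, ← h2, hψq, coeff_zero]
    · push_neg at hex
      rw [hcoeffq]
      exact Finset.sum_eq_zero fun σ hσ => if_neg (hex σ hσ)
  have : p = p - q := by rw [hq0, sub_zero]
  rw [this]
  exact hpqJ
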